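/- Fix γ ∈ (0,1) and an integer r ≥ 1. Let Q ⊂ ℝ^n be a cube centered at the origin, N ∈ ℤ with 2^{N−3} ≤ ℓ(Q) < 2^{N−2}, Ω = [−2^{N−1}, 2^{N−1})^n equipped with normalized Lebesgue measure P, Q*(w) = w + [−2^N, 2^N)^n for w ∈ Ω, D(w) the dyadic lattice of Q*(w), and D₀ = D(0). Say R ∈ D₀ is D(w)-bad if there exists P ∈ D(w) with ℓ(P) ≥ 2^r ℓ(R) and d(R, ∂P) ≤ ℓ(R)^γ ℓ(P)^{1−γ}. Then for every R ∈ D₀, P({w ∈ Ω : R is D(w)-bad}) ≤ C(n, γ) 2^{−γ r}. In particular, for every τ > 0 there exists r depending only on n, γ and τ such that this probability is at most τ for every R ∈ D₀. -/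

import Mathlib

open MeasureTheory Metric Set
open scoped ENNReal NNReal

noncomputable section

abbrev Rn (n : ℕ) : Type := EuclideanSpace ℝ (Fin n)

structure Cube (n : ℕ) : Type where
  c : Rn n
  l : ℝ
  l_pos : 0 < l

namespace Cube

variable {n : ℕ}

/-- The (half-open) cube as a subset of `ℝⁿ`. -/
def set (Q : Cube n) : Set (Rn n) :=
  {x | ∀ i, Q.c i - Q.l / 2 ≤ x i ∧ x i < Q.c i + Q.l / 2}

/-- The concentric dilated cube `λQ` as a set. -/
def dilatedSet (Q : Cube n) (lam : ℝ) : Set (Rn n) :=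
  {x | ∀ i, Q.c i - lam * Q.l / 2 ≤ x i ∧ x i < Q.c i + lam * Q.l / 2}

/-- The distance `d(P,R)` between two cubes. -/
def dist (P R : Cube n) : ℝ :=
  sInf (Set.image2 (fun x y => Dist.dist x y) P.set R.set)

/-- The long distance `D(P,R) = ℓ(P) + ℓ(R) + d(P,R)`. -/
def longDist (P R : Cube n) : ℝ := P.l + R.l + Cube.dist P R

end Cube

/-- The dyadic subcube of `Q₀` of generation `k`, position `j`. -/
def dyadicCube {n : ℕ} (Q₀ : Cube n) (k : ℕ) (j : Fin n → ℕ) : Cube n where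
  c := WithLp.toLp 2 (fun i => Q₀.c i - Q₀.l / 2 + ((j i : ℝ) + 1 / 2) * (Q₀.l / 2 ^ k))
  l := Q₀.l / 2 ^ k
  l_pos := by have := Q₀.l_pos; positivity

/-- The dyadic lattice generated by a cube `Q₀`: all dyadic subcubes obtained from
`Q₀` by repeated bisection. -/
def dyadicLattice {n : ℕ} (Q₀ : Cube n) : Set (Cube n) :=
  {R | ∃ (k : ℕ) (j : Fin n → ℕ), (∀ i, j i < 2 ^ k) ∧ R = dyadicCube Q₀ k j}

/-- The maximal cubes of the family `D` satisfying the property `P`: cubes of `D`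
satisfying `P` such that no strictly larger cube of `D` containing them satisfies
`P`. -/
def maxCubes {n : ℕ} (D : Set (Cube n)) (P : Cube n → Prop) : Set (Cube n) :=
  {R | R ∈ D ∧ P R ∧ ∀ R' ∈ D, R.set ⊂ R'.set → ¬ P R'}

/-- The set of translations `Ω = [-2^{N-1}, 2^{N-1})ⁿ`. -/
def gridOmega (n : ℕ) (N : ℤ) : Set (Rn n) :=
  {w | ∀ i, -(2:ℝ) ^ (N - 1) ≤ w i ∧ w i < (2:ℝ) ^ (N - 1)}

/-- The normalized Lebesgue measure on `gridOmega n N`. -/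
def gridProb (n : ℕ) (N : ℤ) : Measure (Rn n) :=
  (volume (gridOmega n N))⁻¹ • volume.restrict (gridOmega n N)

/-- The translated cube `Q*(w) = w + [-2^N, 2^N)ⁿ`. -/
def Qstar (n : ℕ) (N : ℤ) (w : Rn n) : Cube n :=
  ⟨w, (2:ℝ) ^ (N + 1), by positivity⟩

/-- The distance `d(R, ∂P)` from the cube `R` to the boundary of the cube `P`. -/
def bdryDist {n : ℕ} (R P : Cube n) : ℝ :=
  sInf (Set.image2 (fun x y => Dist.dist x y) R.set (frontier P.set))

/-- `R` is `D`-bad (with parameters `γ`, `r`): there is `P ∈ D` with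
`ℓ(P) ≥ 2^r ℓ(R)` and `d(R, ∂P) ≤ ℓ(R)^γ ℓ(P)^{1-γ}`. -/
def IsBad {n : ℕ} (γ : ℝ) (r : ℕ) (D : Set (Cube n)) (R : Cube n) : Prop :=
  ∃ P ∈ D, (2:ℝ) ^ r * R.l ≤ P.l ∧ bdryDist R P ≤ R.l ^ γ * P.l ^ (1 - γ)

section AuxLemmas

variable {n : ℕ}

lemma coord_dist_le (x y : Rn n) (i : Fin n) : |x i - y i| ≤ dist x y := by
  rw [EuclideanSpace.dist_eq, ← Real.dist_eq, ← Real.sqrt_sq dist_nonneg]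
  exact Real.sqrt_le_sqrt (Finset.single_le_sum (f := fun j => dist (x j) (y j) ^ 2)
    (fun j _ => sq_nonneg _) (Finset.mem_univ i))

lemma boxPi_eq_preimage (t : Fin n → Set ℝ) :
    {w : Rn n | ∀ i, w i ∈ t i}
      = ((MeasurableEquiv.toLp 2 (Fin n → ℝ)).symm) ⁻¹' (Set.univ.pi t) := by
  ext w; simp [Set.mem_pi]

lemma boxPi_measurable (t : Fin n → Set ℝ) (ht : ∀ i, MeasurableSet (t i)) :
    MeasurableSet {w : Rn n | ∀ i, w i ∈ t i} := by
  rw [boxPi_eq_preimage]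
  exact ((MeasurableEquiv.toLp 2 (Fin n → ℝ)).symm).measurable (MeasurableSet.univ_pi ht)

lemma volume_boxPi (t : Fin n → Set ℝ) (ht : ∀ i, MeasurableSet (t i)) :
    volume {w : Rn n | ∀ i, w i ∈ t i} = ∏ i, volume (t i) := by
  rw [boxPi_eq_preimage, (EuclideanSpace.volume_preserving_symm_measurableEquiv_toLp (Fin n)).measure_preimage
    (MeasurableSet.univ_pi ht).nullMeasurableSet, volume_pi_pi]

lemma single_coord (i0 i : Fin n) (a : ℝ) :
    (EuclideanSpace.single i0 a : Rn n) i = if i = i0 then a else 0 :=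
  EuclideanSpace.single_apply i0 a i

lemma cube_set_nonempty (P : Cube n) : P.set.Nonempty :=
  ⟨P.c, fun i => by constructor <;> nlinarith [P.l_pos]⟩

lemma cont_coord (i : Fin n) : Continuous fun x : Rn n => x i :=
  (EuclideanSpace.proj (𝕜 := ℝ) i).continuous

lemma frontier_subset_faces (P : Cube n) :
    frontier P.set ⊆ {y : Rn n | (∀ i, P.c i - P.l / 2 ≤ y i ∧ y i ≤ P.c i + P.l / 2) ∧
      ∃ i, y i = P.c i - P.l / 2 ∨ y i = P.c i + P.l / 2} := by
  intro y hy
  have hcl : closure P.set ⊆ {y : Rn n | ∀ i, P.c i - P.l / 2 ≤ y i ∧ y i ≤ P.c i + P.l / 2} := by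
    apply closure_minimal
    · intro x hx i; exact ⟨(hx i).1, (hx i).2.le⟩
    · have : {y : Rn n | ∀ i, P.c i - P.l / 2 ≤ y i ∧ y i ≤ P.c i + P.l / 2}
          = ⋂ i, (fun x : Rn n => x i) ⁻¹' (Set.Icc (P.c i - P.l / 2) (P.c i + P.l / 2)) := by
        ext x; simp [Set.mem_iInter, Set.mem_Icc]
      rw [this]
      exact isClosed_iInter fun i => isClosed_Icc.preimage (cont_coord i)
  have hint : {y : Rn n | ∀ i, P.c i - P.l / 2 < y i ∧ y i < P.c i + P.l / 2} ⊆ interior P.set := by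
    apply interior_maximal
    · intro x hx i; exact ⟨(hx i).1.le, (hx i).2⟩
    · have : {y : Rn n | ∀ i, P.c i - P.l / 2 < y i ∧ y i < P.c i + P.l / 2}
          = ⋂ i, (fun x : Rn n => x i) ⁻¹' (Set.Ioo (P.c i - P.l / 2) (P.c i + P.l / 2)) := by
        ext x; simp [Set.mem_iInter, Set.mem_Ioo]
      rw [this]
      exact isOpen_iInter_of_finite fun i => isOpen_Ioo.preimage (cont_coord i)
  have h1 := hcl hy.1
  have h2 : ¬ ∀ i, P.c i - P.l / 2 < y i ∧ y i < P.c i + P.l / 2 := fun h => hy.2 (hint h)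
  push_neg at h2
  obtain ⟨i, hi⟩ := h2
  refine ⟨h1, i, ?_⟩
  rcases lt_or_eq_of_le (h1 i).1 with hlt | heq
  · right
    exact le_antisymm (h1 i).2 (hi hlt)
  · left; exact heq.symm

lemma frontier_cube_nonempty (hn : 0 < n) (P : Cube n) : (frontier P.set).Nonempty := by
  classical
  set i0 : Fin n := ⟨0, hn⟩
  set y : Rn n := P.c - (P.l / 2) • EuclideanSpace.single i0 (1:ℝ) with hy
  have hyi : ∀ i, y i = P.c i - P.l / 2 * (if i = i0 then 1 else 0) := by
    intro i
    rw [hy]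
    have : (P.c - (P.l / 2) • EuclideanSpace.single i0 (1:ℝ)) i
        = P.c i - (P.l / 2) * (EuclideanSpace.single i0 (1:ℝ) : Rn n) i := by
      simp
    rw [this, single_coord]
  have hl := P.l_pos
  refine ⟨y, ?_, ?_⟩
  · rw [Metric.mem_closure_iff]
    intro ε hε
    set η : ℝ := min (ε / 2) (P.l / 2) with hη
    have hη0 : 0 < η := lt_min (by linarith) (by linarith)
    have hη1 : η ≤ ε / 2 := min_le_left _ _
    have hη2 : η ≤ P.l / 2 := min_le_right _ _
    refine ⟨y + η • EuclideanSpace.single i0 (1:ℝ), ?_, ?_⟩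
    · intro i
      have happ : (y + η • EuclideanSpace.single i0 (1:ℝ)) i
          = y i + η * (if i = i0 then (1:ℝ) else 0) := by
        have : (y + η • EuclideanSpace.single i0 (1:ℝ)) i
            = y i + η * (EuclideanSpace.single i0 (1:ℝ) : Rn n) i := by simp
        rw [this, single_coord]
      rw [happ, hyi i]
      by_cases h : i = i0
      · simp only [if_pos h]
        constructor <;> nlinarith
      · simp only [if_neg h]
        constructor <;> nlinarith
    · have hd : dist y (y + η • EuclideanSpace.single i0 (1:ℝ)) = η := by
        rw [dist_eq_norm]
        have h2 : y - (y + η • EuclideanSpace.single i0 (1:ℝ))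
            = -(η • EuclideanSpace.single i0 (1:ℝ)) := by abel
        rw [h2, norm_neg, norm_smul, EuclideanSpace.norm_single, norm_one, mul_one,
          Real.norm_eq_abs, abs_of_pos hη0]
      rw [hd]; linarith
  · intro hy_int
    rw [mem_interior_iff_mem_nhds, Metric.mem_nhds_iff] at hy_int
    obtain ⟨ε, hε, hball⟩ := hy_int
    have hz : y - (ε/2) • EuclideanSpace.single i0 (1:ℝ) ∈ ball y ε := by
      rw [mem_ball, dist_eq_norm]
      have h2 : y - (ε/2) • EuclideanSpace.single i0 (1:ℝ) - y
          = -((ε/2) • EuclideanSpace.single i0 (1:ℝ)) := by abel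
      rw [h2, norm_neg, norm_smul, EuclideanSpace.norm_single, norm_one, mul_one,
        Real.norm_eq_abs, abs_of_pos (by linarith : (0:ℝ) < ε/2)]
      linarith
    have hzP := (hball hz) i0
    have happ : (y - (ε/2) • EuclideanSpace.single i0 (1:ℝ)) i0
        = y i0 - (ε/2) * 1 := by
      have : (y - (ε/2) • EuclideanSpace.single i0 (1:ℝ)) i0
          = y i0 - (ε/2) * (EuclideanSpace.single i0 (1:ℝ) : Rn n) i0 := by simp
      rw [this, single_coord, if_pos rfl]
    rw [happ, hyi i0, if_pos rfl] at hzP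
    have := hzP.1
    linarith

lemma sumBound {γ : ℝ} (hγ0 : 0 < γ) (hγ1 : γ < 1) (N : ℤ) (r k : ℕ)
    (hrk : r ≤ k) :
    ∑ m ∈ Finset.range (k - r + 1),
      13 * (2:ℝ) ^ ((m:ℝ) - 1) *
        ((2:ℝ) ^ ((N:ℝ) + 1 - k) +
          4 * ((2:ℝ) ^ ((N:ℝ) + 1 - k)) ^ γ * ((2:ℝ) ^ ((N:ℝ) + 1 - m)) ^ (1 - γ))
      ≤ (130 / ((2:ℝ) ^ γ - 1)) * (2:ℝ) ^ (-(γ * r)) * (2:ℝ) ^ (N:ℝ) := by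
  have h2 : (0:ℝ) < 2 := two_pos
  have h2' : (0:ℝ) ≤ 2 := le_of_lt h2
  have hργ : (1:ℝ) < (2:ℝ) ^ γ := by
    rw [show (1:ℝ) = (2:ℝ) ^ (0:ℝ) by simp]
    exact Real.rpow_lt_rpow_left_iff one_lt_two |>.mpr hγ0
  have hden : (0:ℝ) < (2:ℝ) ^ γ - 1 := by linarith
  have hterm : ∀ m ∈ Finset.range (k - r + 1),
      13 * (2:ℝ) ^ ((m:ℝ) - 1) *
        ((2:ℝ) ^ ((N:ℝ) + 1 - k) +
          4 * ((2:ℝ) ^ ((N:ℝ) + 1 - k)) ^ γ * ((2:ℝ) ^ ((N:ℝ) + 1 - m)) ^ (1 - γ))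
      ≤ 65 * ((2:ℝ) ^ (N:ℝ) * ((2:ℝ) ^ (-(γ * k)) * ((2:ℝ) ^ γ) ^ m)) := by
    intro m hm
    have hmk : (m:ℝ) ≤ (k:ℝ) := by
      have : m ≤ k := le_trans (Nat.lt_succ_iff.mp (Finset.mem_range.mp hm))
        (Nat.sub_le _ _)
      exact_mod_cast this
    have e1 : (2:ℝ) ^ ((m:ℝ) - 1) * (2:ℝ) ^ ((N:ℝ) + 1 - k)
        = (2:ℝ) ^ ((N:ℝ) + ((m:ℝ) - k)) := by
      rw [← Real.rpow_add h2]; ring_nf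
    have e2 : ((2:ℝ) ^ ((N:ℝ) + 1 - k)) ^ γ * ((2:ℝ) ^ ((N:ℝ) + 1 - m)) ^ (1 - γ)
        = (2:ℝ) ^ (γ * ((N:ℝ) + 1 - k) + (1 - γ) * ((N:ℝ) + 1 - m)) := by
      rw [← Real.rpow_mul h2', ← Real.rpow_mul h2', ← Real.rpow_add h2]
      ring_nf
    have e3 : (2:ℝ) ^ ((m:ℝ) - 1) * (2:ℝ) ^ (γ * ((N:ℝ) + 1 - k) + (1 - γ) * ((N:ℝ) + 1 - m))
        = (2:ℝ) ^ ((N:ℝ) + γ * ((m:ℝ) - k)) := by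
      rw [← Real.rpow_add h2]; ring_nf
    have hmono : (2:ℝ) ^ ((N:ℝ) + ((m:ℝ) - k)) ≤ (2:ℝ) ^ ((N:ℝ) + γ * ((m:ℝ) - k)) := by
      apply Real.rpow_le_rpow_of_exponent_le one_le_two
      nlinarith
    have efin : (2:ℝ) ^ ((N:ℝ) + γ * ((m:ℝ) - k))
        = (2:ℝ) ^ (N:ℝ) * ((2:ℝ) ^ (-(γ * k)) * ((2:ℝ) ^ γ) ^ m) := by
      rw [← Real.rpow_natCast ((2:ℝ) ^ γ) m, ← Real.rpow_mul h2',
        ← Real.rpow_add h2, ← Real.rpow_add h2]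
      ring_nf
    have hpos : (0:ℝ) < (2:ℝ) ^ ((N:ℝ) + γ * ((m:ℝ) - k)) := Real.rpow_pos_of_pos h2 _
    calc 13 * (2:ℝ) ^ ((m:ℝ) - 1) *
        ((2:ℝ) ^ ((N:ℝ) + 1 - k) +
          4 * ((2:ℝ) ^ ((N:ℝ) + 1 - k)) ^ γ * ((2:ℝ) ^ ((N:ℝ) + 1 - m)) ^ (1 - γ))
        = 13 * ((2:ℝ) ^ ((m:ℝ) - 1) * (2:ℝ) ^ ((N:ℝ) + 1 - k))
          + 52 * ((2:ℝ) ^ ((m:ℝ) - 1) *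
             (((2:ℝ) ^ ((N:ℝ) + 1 - k)) ^ γ * ((2:ℝ) ^ ((N:ℝ) + 1 - m)) ^ (1 - γ))) := by
          ring
      _ = 13 * (2:ℝ) ^ ((N:ℝ) + ((m:ℝ) - k)) + 52 * (2:ℝ) ^ ((N:ℝ) + γ * ((m:ℝ) - k)) := by
          rw [e1, e2, e3]
      _ ≤ 13 * (2:ℝ) ^ ((N:ℝ) + γ * ((m:ℝ) - k)) + 52 * (2:ℝ) ^ ((N:ℝ) + γ * ((m:ℝ) - k)) := by
          nlinarith
      _ = 65 * (2:ℝ) ^ ((N:ℝ) + γ * ((m:ℝ) - k)) := by ring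
      _ = 65 * ((2:ℝ) ^ (N:ℝ) * ((2:ℝ) ^ (-(γ * k)) * ((2:ℝ) ^ γ) ^ m)) := by rw [efin]
  refine le_trans (Finset.sum_le_sum hterm) ?_
  rw [← Finset.mul_sum, ← Finset.mul_sum, ← Finset.mul_sum]
  have hgeom : ∑ m ∈ Finset.range (k - r + 1), ((2:ℝ) ^ γ) ^ m
      ≤ ((2:ℝ) ^ γ) ^ (k - r + 1) / ((2:ℝ) ^ γ - 1) := by
    rw [geom_sum_eq (ne_of_gt hργ)]
    gcongr
    linarith
  have hNpos : (0:ℝ) < (2:ℝ) ^ (N:ℝ) := Real.rpow_pos_of_pos h2 _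
  have hbpos : (0:ℝ) < (2:ℝ) ^ (-(γ * r)) := Real.rpow_pos_of_pos h2 _
  have hcast : ((k - r + 1 : ℕ) : ℝ) = (k:ℝ) - r + 1 := by
    push_cast [hrk]; ring
  have e4 : (2:ℝ) ^ (-(γ * k)) * ((2:ℝ) ^ γ) ^ (k - r + 1)
      = (2:ℝ) ^ γ * (2:ℝ) ^ (-(γ * r)) := by
    rw [← Real.rpow_natCast ((2:ℝ) ^ γ) (k - r + 1), ← Real.rpow_mul h2',
      ← Real.rpow_add h2, hcast, ← Real.rpow_add h2]
    ring_nf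
  have h6 : (2:ℝ) ^ γ ≤ 2 := by
    calc (2:ℝ) ^ γ ≤ (2:ℝ) ^ (1:ℝ) :=
          Real.rpow_le_rpow_of_exponent_le one_le_two hγ1.le
      _ = 2 := Real.rpow_one 2
  calc 65 * ((2:ℝ) ^ (N:ℝ) * ((2:ℝ) ^ (-(γ * k)) *
        ∑ m ∈ Finset.range (k - r + 1), ((2:ℝ) ^ γ) ^ m))
      ≤ 65 * ((2:ℝ) ^ (N:ℝ) * ((2:ℝ) ^ (-(γ * k)) *
        (((2:ℝ) ^ γ) ^ (k - r + 1) / ((2:ℝ) ^ γ - 1)))) := by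
        gcongr
    _ = 65 * ((2:ℝ) ^ (N:ℝ) * (((2:ℝ) ^ γ * (2:ℝ) ^ (-(γ * r))) / ((2:ℝ) ^ γ - 1))) := by
        rw [mul_div_assoc', e4]
    _ ≤ 65 * ((2:ℝ) ^ (N:ℝ) * ((2 * (2:ℝ) ^ (-(γ * r))) / ((2:ℝ) ^ γ - 1))) := by
        gcongr
    _ = (130 / ((2:ℝ) ^ γ - 1)) * (2:ℝ) ^ (-(γ * r)) * (2:ℝ) ^ (N:ℝ) := by
        field_simp; ring

end AuxLemmas

lemma mainBound {n : ℕ} (hn : 0 < n) {γ : ℝ} (hγ0 : 0 < γ) (hγ1 : γ < 1)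
    (r : ℕ) (hr : 1 ≤ r) (N : ℤ) (k : ℕ) (jR : Fin n → ℕ) :
    gridProb n N {w ∈ gridOmega n N |
        IsBad γ r (dyadicLattice (Qstar n N w)) (dyadicCube (Qstar n N 0) k jR)}
      ≤ ENNReal.ofReal ((130 * n / ((2:ℝ) ^ γ - 1)) * (2:ℝ) ^ (-(γ * (r:ℝ)))) := by
  classical
  have h2 : (0:ℝ) < 2 := two_pos
  have h2' : (0:ℝ) ≤ 2 := h2.le
  set sP : ℕ → ℝ := fun m => (2:ℝ) ^ ((N:ℝ) + 1 - m) with hsP_def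
  set dl : ℕ → ℝ := fun m => sP k ^ γ * sP m ^ (1 - γ) with hdl_def
  set lo : Fin n → ℝ := fun i => -(2:ℝ) ^ ((N:ℝ)) + (jR i : ℝ) * sP k with hlo_def
  have hsPpos : ∀ m, 0 < sP m := fun m => Real.rpow_pos_of_pos h2 _
  have hdlpos : ∀ m, 0 < dl m := fun m => by
    have := hsPpos k; have := hsPpos m
    exact mul_pos (Real.rpow_pos_of_pos (hsPpos k) _) (Real.rpow_pos_of_pos (hsPpos m) _)
  have hNr : (0:ℝ) < (2:ℝ) ^ ((N:ℝ)) := Real.rpow_pos_of_pos h2 _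
  have hN1 : (0:ℝ) < (2:ℝ) ^ ((N:ℝ) - 1) := Real.rpow_pos_of_pos h2 _
  have hzpow : ∀ z : ℤ, (2:ℝ) ^ z = (2:ℝ) ^ ((z:ℝ)) := fun z => (Real.rpow_intCast 2 z).symm
  have hN2 : (2:ℝ) ^ ((N:ℝ)) = 2 * (2:ℝ) ^ ((N:ℝ) - 1) := by
    have h := Real.rpow_add h2 ((N:ℝ) - 1) 1
    rw [Real.rpow_one] at h
    have he : ((N:ℝ) - 1) + 1 = (N:ℝ) := by ring
    rw [he] at h
    linarith
  have hNz : (2:ℝ) ^ (N - 1 : ℤ) = (2:ℝ) ^ ((N:ℝ) - 1) := by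
    rw [hzpow]; norm_num
  have hQl : (2:ℝ) ^ (N + 1 : ℤ) = 2 * (2:ℝ) ^ ((N:ℝ)) := by
    rw [hzpow]
    have he : ((N + 1 : ℤ) : ℝ) = (N:ℝ) + 1 := by push_cast; ring
    rw [he, Real.rpow_add h2, Real.rpow_one]; ring
  have hdiv : ∀ m : ℕ, (2:ℝ) ^ (N + 1 : ℤ) / 2 ^ m = sP m := by
    intro m
    rw [hzpow, ← Real.rpow_natCast 2 m, ← Real.rpow_sub h2]
    congr 1; push_cast; ring
  have hRl : (dyadicCube (Qstar n N 0) k jR).l = sP k := hdiv k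
  have hPl : ∀ (w : Rn n) m jP, (dyadicCube (Qstar n N w) m jP).l = sP m :=
    fun w m jP => hdiv m
  have hzero : ∀ i : Fin n, (0 : Rn n) i = 0 := fun i => rfl
  have hRlo : ∀ i, (dyadicCube (Qstar n N 0) k jR).c i
      - (dyadicCube (Qstar n N 0) k jR).l / 2 = lo i := by
    intro i
    show (0 : Rn n) i - (2:ℝ) ^ (N + 1 : ℤ) / 2 + ((jR i : ℝ) + 1/2) * ((2:ℝ) ^ (N + 1 : ℤ) / 2 ^ k)
      - ((2:ℝ) ^ (N + 1 : ℤ) / 2 ^ k) / 2 = lo i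
    rw [hzero, hdiv k, hQl, hlo_def]; ring
  have hRhi : ∀ i, (dyadicCube (Qstar n N 0) k jR).c i
      + (dyadicCube (Qstar n N 0) k jR).l / 2 = lo i + sP k := by
    intro i
    show (0 : Rn n) i - (2:ℝ) ^ (N + 1 : ℤ) / 2 + ((jR i : ℝ) + 1/2) * ((2:ℝ) ^ (N + 1 : ℤ) / 2 ^ k)
      + ((2:ℝ) ^ (N + 1 : ℤ) / 2 ^ k) / 2 = lo i + sP k
    rw [hzero, hdiv k, hQl, hlo_def]; ring
  have hPlo : ∀ (w : Rn n) m jP (i : Fin n), (dyadicCube (Qstar n N w) m jP).c i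
      - (dyadicCube (Qstar n N w) m jP).l / 2
      = w i - (2:ℝ) ^ ((N:ℝ)) + (jP i : ℝ) * sP m := by
    intro w m jP i
    show w i - (2:ℝ) ^ (N + 1 : ℤ) / 2 + ((jP i : ℝ) + 1/2) * ((2:ℝ) ^ (N + 1 : ℤ) / 2 ^ m)
      - ((2:ℝ) ^ (N + 1 : ℤ) / 2 ^ m) / 2 = _
    rw [hdiv m, hQl]; ring
  have hPhi : ∀ (w : Rn n) m jP (i : Fin n), (dyadicCube (Qstar n N w) m jP).c i
      + (dyadicCube (Qstar n N w) m jP).l / 2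
      = w i - (2:ℝ) ^ ((N:ℝ)) + ((jP i : ℝ) + 1) * sP m := by
    intro w m jP i
    show w i - (2:ℝ) ^ (N + 1 : ℤ) / 2 + ((jP i : ℝ) + 1/2) * ((2:ℝ) ^ (N + 1 : ℤ) / 2 ^ m)
      + ((2:ℝ) ^ (N + 1 : ℤ) / 2 ^ m) / 2 = _
    rw [hdiv m, hQl]; ring
  have hrmk : ∀ m : ℕ, (2:ℝ) ^ r * sP k ≤ sP m → r + m ≤ k := by
    intro m h
    rw [← Real.rpow_natCast 2 r, ← Real.rpow_add h2] at h
    have h' := (Real.rpow_le_rpow_left_iff one_lt_two).mp h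
    have : (r:ℝ) + (m:ℝ) ≤ (k:ℝ) := by linarith
    exact_mod_cast this
  by_cases hkr : r ≤ k
  case neg =>
    have hempty : {w ∈ gridOmega n N |
        IsBad γ r (dyadicLattice (Qstar n N w)) (dyadicCube (Qstar n N 0) k jR)} = ∅ := by
      ext w
      simp only [Set.mem_setOf_eq, Set.mem_empty_iff_false, iff_false, not_and]
      intro hw
      rintro ⟨P, ⟨m, jP, hjP, rfl⟩, hPls, -⟩
      rw [hRl, hPl] at hPls
      have := hrmk m hPls
      omega
    rw [hempty, measure_empty]
    exact zero_le
  case pos =>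
  set Qf : ℕ → Fin n → Finset ℤ := fun m i =>
    Finset.Icc ⌈(lo i + (2:ℝ) ^ ((N:ℝ) - 1) - 2 * dl m) / sP m⌉
      ⌊(lo i + sP k + 3 * (2:ℝ) ^ ((N:ℝ) - 1) + 2 * dl m) / sP m⌋ with hQf_def
  set tset : ℕ → Fin n → ℤ → Fin n → Set ℝ := fun m i q i' =>
    if i' = i then
      Set.Icc (lo i + (2:ℝ) ^ ((N:ℝ)) - (q:ℝ) * sP m - 2 * dl m)
        (lo i + sP k + (2:ℝ) ^ ((N:ℝ)) - (q:ℝ) * sP m + 2 * dl m)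
    else Set.Ico (-(2:ℝ) ^ (N - 1 : ℤ)) ((2:ℝ) ^ (N - 1 : ℤ)) with htset_def
  set slab : ℕ → Fin n → ℤ → Set (Rn n) := fun m i q =>
    {w : Rn n | ∀ i', w i' ∈ tset m i q i'} with hslab_def
  -- the inclusion
  have hsub : {w ∈ gridOmega n N |
      IsBad γ r (dyadicLattice (Qstar n N w)) (dyadicCube (Qstar n N 0) k jR)}
      ⊆ ⋃ m ∈ Finset.range (k - r + 1), ⋃ i ∈ (Finset.univ : Finset (Fin n)),
          ⋃ q ∈ Qf m i, slab m i q := by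
    rintro w ⟨hwΩ, P, ⟨m, jP, hjP, rfl⟩, hPls, hPd⟩
    rw [hRl, hPl] at hPls
    have hrm := hrmk m hPls
    have hmmem : m ∈ Finset.range (k - r + 1) := Finset.mem_range.mpr (by omega)
    rw [hRl, hPl] at hPd
    have hb : bdryDist (dyadicCube (Qstar n N 0) k jR) (dyadicCube (Qstar n N w) m jP)
        = sInf (Set.image2 (fun x y => dist x y) (dyadicCube (Qstar n N 0) k jR).set
            (frontier (dyadicCube (Qstar n N w) m jP).set)) := rfl
    have hne : (Set.image2 (fun x y => dist x y) (dyadicCube (Qstar n N 0) k jR).set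
        (frontier (dyadicCube (Qstar n N w) m jP).set)).Nonempty :=
      Set.Nonempty.image2 (cube_set_nonempty _) (frontier_cube_nonempty hn _)
    have hbdd : BddBelow (Set.image2 (fun x y => dist x y) (dyadicCube (Qstar n N 0) k jR).set
        (frontier (dyadicCube (Qstar n N w) m jP).set)) := by
      refine ⟨0, ?_⟩
      rintro d ⟨x, hx, y, hy, rfl⟩
      exact dist_nonneg
    have hlt : bdryDist (dyadicCube (Qstar n N 0) k jR) (dyadicCube (Qstar n N w) m jP)
        < 2 * dl m := by
      refine lt_of_le_of_lt hPd ?_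
      show dl m < 2 * dl m
      linarith [hdlpos m]
    rw [hb] at hlt
    obtain ⟨d, hdmem, hdlt⟩ := (csInf_lt_iff hbdd hne).mp hlt
    obtain ⟨x, hx, y, hy, rfl⟩ := hdmem
    obtain ⟨hybox, i, hyface⟩ := frontier_subset_faces _ hy
    have hxy : |x i - y i| < 2 * dl m := lt_of_le_of_lt (coord_dist_le x y i) hdlt
    obtain ⟨q, hq⟩ : ∃ q : ℤ, y i = w i - (2:ℝ) ^ ((N:ℝ)) + (q:ℝ) * sP m := by
      rcases hyface with h | h
      · exact ⟨jP i, by rw [h, hPlo]; push_cast; ring⟩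
      · exact ⟨jP i + 1, by rw [h, hPhi]; push_cast; ring⟩
    have hxlo : lo i ≤ x i := by
      have := (hx i).1; rw [hRlo] at this; exact this
    have hxhi : x i < lo i + sP k := by
      have := (hx i).2; rw [hRhi] at this; exact this
    have habs := abs_lt.mp hxy
    have hwin : ∀ i' : Fin n, -(2:ℝ) ^ ((N:ℝ) - 1) ≤ w i' ∧ w i' < (2:ℝ) ^ ((N:ℝ) - 1) := by
      intro i'
      have := hwΩ i'
      rw [hNz] at this
      exact this
    refine Set.mem_biUnion hmmem (Set.mem_biUnion (Finset.mem_univ i)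
      (Set.mem_biUnion (x := q) ?_ ?_))
    · show q ∈ Finset.Icc ⌈(lo i + (2:ℝ) ^ ((N:ℝ) - 1) - 2 * dl m) / sP m⌉
          ⌊(lo i + sP k + 3 * (2:ℝ) ^ ((N:ℝ) - 1) + 2 * dl m) / sP m⌋
      rw [Finset.mem_Icc]
      constructor
      · apply Int.ceil_le.mpr
        rw [div_le_iff₀ (hsPpos m)]
        have h1 := (hwin i).2
        linarith [habs.1, habs.2, hq, hxlo, hN2]
      · apply Int.le_floor.mpr
        rw [le_div_iff₀ (hsPpos m)]
        have h1 := (hwin i).1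
        linarith [habs.1, habs.2, hxhi, hN2]
    · intro i'
      by_cases hii : i' = i
      · simp only [htset_def]
        rw [if_pos hii, hii, Set.mem_Icc]
        constructor
        · linarith [habs.1, hxlo]
        · linarith [habs.2, hxhi]
      · simp only [htset_def]
        rw [if_neg hii, Set.mem_Ico]
        exact hwΩ i'
  -- measure part
  set u : ℝ≥0∞ := ENNReal.ofReal ((2:ℝ) ^ ((N:ℝ))) with hu_def
  have hu0 : u ≠ 0 := by
    rw [hu_def]; exact ne_of_gt (ENNReal.ofReal_pos.mpr hNr)
  have hutop : u ≠ ⊤ := ENNReal.ofReal_ne_top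
  have hslabvol : ∀ m i q, volume (slab m i q)
      = ENNReal.ofReal (sP k + 4 * dl m) * u ^ (n - 1) := by
    intro m i q
    rw [hslab_def]
    simp only
    rw [volume_boxPi _ (fun i' => by
      by_cases hii : i' = i
      · simp only [htset_def]; rw [if_pos hii]; exact measurableSet_Icc
      · simp only [htset_def]; rw [if_neg hii]; exact measurableSet_Ico)]
    have hv : ∀ i', volume (tset m i q i')
        = if i' = i then ENNReal.ofReal (sP k + 4 * dl m) else u := by
      intro i'
      by_cases hii : i' = i
      · simp only [htset_def]
        rw [if_pos hii, if_pos hii, Real.volume_Icc]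
        congr 1; ring
      · simp only [htset_def]
        rw [if_neg hii, if_neg hii, Real.volume_Ico, hu_def]
        congr 1
        rw [hNz]
        linarith [hN2]
    rw [Finset.prod_congr rfl fun i' _ => hv i',
      ← Finset.mul_prod_erase Finset.univ _ (Finset.mem_univ i), if_pos rfl]
    congr 1
    rw [Finset.prod_congr rfl (fun i' hi' => if_neg (Finset.ne_of_mem_erase hi')),
      Finset.prod_const, Finset.card_erase_of_mem (Finset.mem_univ i),
      Finset.card_univ, Fintype.card_fin]
  have hΩbox : gridOmega n N
      = {w : Rn n | ∀ i, w i ∈ Set.Ico (-(2:ℝ) ^ (N - 1 : ℤ)) ((2:ℝ) ^ (N - 1 : ℤ))} := rfl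
  have hΩmeas : MeasurableSet (gridOmega n N) := by
    rw [hΩbox]; exact boxPi_measurable _ fun i => measurableSet_Ico
  have hΩvol : volume (gridOmega n N) = u ^ n := by
    rw [hΩbox, volume_boxPi _ fun i => measurableSet_Ico]
    have : ∀ i : Fin n, volume (Set.Ico (-(2:ℝ) ^ (N - 1 : ℤ)) ((2:ℝ) ^ (N - 1 : ℤ))) = u := by
      intro i
      rw [Real.volume_Ico, hu_def]
      congr 1
      rw [hNz]
      linarith [hN2]
    rw [Finset.prod_congr rfl fun i _ => this i, Finset.prod_const,
      Finset.card_univ, Fintype.card_fin]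
  -- cardinality bound
  have hcard : ∀ m, m ∈ Finset.range (k - r + 1) → ∀ i : Fin n,
      ((Qf m i).card : ℝ) ≤ 13 * (2:ℝ) ^ ((m:ℝ) - 1) := by
    intro m hm i
    have hmk : m ≤ k := by
      have := Finset.mem_range.mp hm; omega
    have hs := hsPpos m
    have hKpos : (0:ℝ) < 13 * (2:ℝ) ^ ((m:ℝ) - 1) := by positivity
    have hlRles : sP k ≤ sP m := by
      apply Real.rpow_le_rpow_of_exponent_le one_le_two
      have : (m:ℝ) ≤ (k:ℝ) := by exact_mod_cast hmk
      linarith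
    have hdles : dl m ≤ sP m := by
      have h1 : sP k ^ γ ≤ sP m ^ γ :=
        Real.rpow_le_rpow (hsPpos k).le hlRles hγ0.le
      have h2'' : sP m ^ γ * sP m ^ (1 - γ) = sP m := by
        rw [← Real.rpow_add hs]; norm_num
      calc dl m = sP k ^ γ * sP m ^ (1 - γ) := rfl
        _ ≤ sP m ^ γ * sP m ^ (1 - γ) := by
            apply mul_le_mul_of_nonneg_right h1 (Real.rpow_pos_of_pos hs _).le
        _ = sP m := h2''
    have h2pow : (2:ℝ) ^ ((m:ℝ) - 1) * sP m = (2:ℝ) ^ ((N:ℝ)) := by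
      rw [hsP_def]
      simp only
      rw [← Real.rpow_add h2]
      congr 1; ring
    have hhalf : (1:ℝ) ≤ 2 * (2:ℝ) ^ ((m:ℝ) - 1) := by
      have h1 : (2:ℝ) ^ (-1:ℝ) ≤ (2:ℝ) ^ ((m:ℝ) - 1) := by
        apply Real.rpow_le_rpow_of_exponent_le one_le_two
        have : (0:ℝ) ≤ (m:ℝ) := Nat.cast_nonneg m
        linarith
      rw [Real.rpow_neg_one] at h1
      norm_num at h1
      linarith
    have hcval : (Qf m i).card
        = (⌊(lo i + sP k + 3 * (2:ℝ) ^ ((N:ℝ) - 1) + 2 * dl m) / sP m⌋ + 1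
          - ⌈(lo i + (2:ℝ) ^ ((N:ℝ) - 1) - 2 * dl m) / sP m⌉).toNat := Int.card_Icc _ _
    rw [hcval]
    set A : ℝ := (lo i + (2:ℝ) ^ ((N:ℝ) - 1) - 2 * dl m) / sP m with hA_def
    set B : ℝ := (lo i + sP k + 3 * (2:ℝ) ^ ((N:ℝ) - 1) + 2 * dl m) / sP m with hB_def
    have hcast : (((⌊B⌋ + 1 - ⌈A⌉).toNat : ℕ) : ℝ) = max (((⌊B⌋ + 1 - ⌈A⌉ : ℤ)) : ℝ) 0 := by
      rw [← Int.cast_natCast, Int.toNat_eq_max]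
      push_cast
      ring_nf
    rw [hcast]
    apply max_le _ hKpos.le
    have hfl : ((⌊B⌋ : ℤ) : ℝ) ≤ B := Int.floor_le B
    have hce : A ≤ ((⌈A⌉ : ℤ) : ℝ) := Int.le_ceil A
    have hBA : B + 1 - A ≤ 13 * (2:ℝ) ^ ((m:ℝ) - 1) := by
      have he : B + 1 - A = (sP k + 2 * (2:ℝ) ^ ((N:ℝ) - 1) + 4 * dl m + sP m) / sP m := by
        rw [hA_def, hB_def]
        field_simp
        ring
      rw [he, div_le_iff₀ hs]
      nlinarith [mul_le_mul_of_nonneg_right hhalf hs.le, hdlpos m, hsPpos k]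
    push_cast
    linarith
  -- assembling
  calc gridProb n N {w ∈ gridOmega n N |
        IsBad γ r (dyadicLattice (Qstar n N w)) (dyadicCube (Qstar n N 0) k jR)}
      = (volume (gridOmega n N))⁻¹ * volume ({w ∈ gridOmega n N |
          IsBad γ r (dyadicLattice (Qstar n N w)) (dyadicCube (Qstar n N 0) k jR)}
          ∩ gridOmega n N) := by
        rw [gridProb, Measure.smul_apply, smul_eq_mul, Measure.restrict_apply' hΩmeas]
    _ ≤ (volume (gridOmega n N))⁻¹ * volume (⋃ m ∈ Finset.range (k - r + 1),
          ⋃ i ∈ (Finset.univ : Finset (Fin n)), ⋃ q ∈ Qf m i, slab m i q) := by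
        gcongr
        exact Set.inter_subset_left.trans hsub
    _ ≤ (volume (gridOmega n N))⁻¹ * ∑ m ∈ Finset.range (k - r + 1),
          ∑ i ∈ (Finset.univ : Finset (Fin n)), ∑ q ∈ Qf m i, volume (slab m i q) := by
        gcongr
        refine le_trans (measure_biUnion_finset_le _ _) (Finset.sum_le_sum fun m _ => ?_)
        refine le_trans (measure_biUnion_finset_le _ _) (Finset.sum_le_sum fun i _ => ?_)
        exact measure_biUnion_finset_le _ _
    _ ≤ (volume (gridOmega n N))⁻¹ * ∑ m ∈ Finset.range (k - r + 1),
          ∑ i ∈ (Finset.univ : Finset (Fin n)),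
            ENNReal.ofReal ((13 * (2:ℝ) ^ ((m:ℝ) - 1)) * (sP k + 4 * dl m)) * u ^ (n - 1) := by
        gcongr with m hm i hi
        calc ∑ q ∈ Qf m i, volume (slab m i q)
            = ∑ _q ∈ Qf m i, ENNReal.ofReal (sP k + 4 * dl m) * u ^ (n - 1) :=
              Finset.sum_congr rfl fun q _ => hslabvol m i q
          _ = ((Qf m i).card : ℝ≥0∞) * (ENNReal.ofReal (sP k + 4 * dl m) * u ^ (n - 1)) := by
              rw [Finset.sum_const, nsmul_eq_mul]
          _ ≤ ENNReal.ofReal (13 * (2:ℝ) ^ ((m:ℝ) - 1))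
              * (ENNReal.ofReal (sP k + 4 * dl m) * u ^ (n - 1)) := by
              apply mul_le_mul_left
              rw [← ENNReal.ofReal_natCast]
              exact ENNReal.ofReal_le_ofReal (hcard m hm i)
          _ = ENNReal.ofReal ((13 * (2:ℝ) ^ ((m:ℝ) - 1)) * (sP k + 4 * dl m)) * u ^ (n - 1) := by
              rw [← mul_assoc, ← ENNReal.ofReal_mul (by positivity)]
    _ = (volume (gridOmega n N))⁻¹ * ((n : ℝ≥0∞)
          * ((∑ m ∈ Finset.range (k - r + 1),
              ENNReal.ofReal ((13 * (2:ℝ) ^ ((m:ℝ) - 1)) * (sP k + 4 * dl m))) * u ^ (n - 1))) := by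
        congr 1
        calc ∑ m ∈ Finset.range (k - r + 1), ∑ _i ∈ (Finset.univ : Finset (Fin n)),
              ENNReal.ofReal ((13 * (2:ℝ) ^ ((m:ℝ) - 1)) * (sP k + 4 * dl m)) * u ^ (n - 1)
            = ∑ m ∈ Finset.range (k - r + 1), (n : ℝ≥0∞)
                * (ENNReal.ofReal ((13 * (2:ℝ) ^ ((m:ℝ) - 1)) * (sP k + 4 * dl m)) * u ^ (n - 1)) :=
              Finset.sum_congr rfl fun m _ => by
                rw [Finset.sum_const, Finset.card_univ, Fintype.card_fin, nsmul_eq_mul]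
          _ = (n : ℝ≥0∞) * ∑ m ∈ Finset.range (k - r + 1),
                ENNReal.ofReal ((13 * (2:ℝ) ^ ((m:ℝ) - 1)) * (sP k + 4 * dl m)) * u ^ (n - 1) := by
              rw [← Finset.mul_sum]
          _ = (n : ℝ≥0∞) * ((∑ m ∈ Finset.range (k - r + 1),
                ENNReal.ofReal ((13 * (2:ℝ) ^ ((m:ℝ) - 1)) * (sP k + 4 * dl m))) * u ^ (n - 1)) := by
              rw [← Finset.sum_mul]
    _ ≤ (volume (gridOmega n N))⁻¹ * ((n : ℝ≥0∞)
          * (ENNReal.ofReal ((130 / ((2:ℝ) ^ γ - 1)) * (2:ℝ) ^ (-(γ * (r:ℝ))) * (2:ℝ) ^ ((N:ℝ)))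
            * u ^ (n - 1))) := by
        gcongr
        have hsum := sumBound hγ0 hγ1 N r k hkr
        have hsum' : ∑ m ∈ Finset.range (k - r + 1),
            (13 * (2:ℝ) ^ ((m:ℝ) - 1)) * (sP k + 4 * dl m)
            ≤ (130 / ((2:ℝ) ^ γ - 1)) * (2:ℝ) ^ (-(γ * (r:ℝ))) * (2:ℝ) ^ ((N:ℝ)) := by
          refine le_trans (le_of_eq (Finset.sum_congr rfl fun m _ => ?_)) hsum
          show (13 * (2:ℝ) ^ ((m:ℝ) - 1)) * (sP k + 4 * dl m) = _
          rw [hdl_def, hsP_def]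
          ring
        calc ∑ m ∈ Finset.range (k - r + 1),
              ENNReal.ofReal ((13 * (2:ℝ) ^ ((m:ℝ) - 1)) * (sP k + 4 * dl m))
            = ENNReal.ofReal (∑ m ∈ Finset.range (k - r + 1),
                (13 * (2:ℝ) ^ ((m:ℝ) - 1)) * (sP k + 4 * dl m)) := by
              rw [ENNReal.ofReal_sum_of_nonneg]
              intro m _
              have := hdlpos m
              have := hsPpos k
              positivity
          _ ≤ _ := ENNReal.ofReal_le_ofReal hsum'
    _ = ENNReal.ofReal ((130 * n / ((2:ℝ) ^ γ - 1)) * (2:ℝ) ^ (-(γ * (r:ℝ)))) := by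
        rw [hΩvol]
        have hCpos : (0:ℝ) ≤ (130 * n / ((2:ℝ) ^ γ - 1)) * (2:ℝ) ^ (-(γ * (r:ℝ))) := by
          have hργ : (1:ℝ) < (2:ℝ) ^ γ := by
            rw [show (1:ℝ) = (2:ℝ) ^ (0:ℝ) by simp]
            exact Real.rpow_lt_rpow_left_iff one_lt_two |>.mpr hγ0
          have : (0:ℝ) < (2:ℝ) ^ γ - 1 := by linarith
          positivity
        have hreal : (n:ℝ) * ((130 / ((2:ℝ) ^ γ - 1)) * (2:ℝ) ^ (-(γ * (r:ℝ))) * (2:ℝ) ^ ((N:ℝ)))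
            = ((130 * n / ((2:ℝ) ^ γ - 1)) * (2:ℝ) ^ (-(γ * (r:ℝ)))) * (2:ℝ) ^ ((N:ℝ)) := by
          ring
        rw [← ENNReal.ofReal_natCast n, ← mul_assoc (ENNReal.ofReal (n:ℝ)),
          ← ENNReal.ofReal_mul (Nat.cast_nonneg n), hreal, ENNReal.ofReal_mul hCpos]
        have hupow : ENNReal.ofReal ((2:ℝ) ^ ((N:ℝ))) = u := by rw [hu_def]
        rw [hupow, mul_assoc, mul_comm u (u ^ (n-1)), ← pow_succ,
          show (n - 1) + 1 = n from by omega]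
        rw [mul_comm (ENNReal.ofReal _) (u ^ n), ← mul_assoc,
          ENNReal.inv_mul_cancel (pow_ne_zero _ hu0) (ENNReal.pow_ne_top hutop), one_mul]

/-- (Probability of bad cubes, Nazarov–Treil–Volberg.)  Fix
`γ ∈ (0,1)` and `r ≥ 1`.  With the random dyadic grids `D(w) = D(Q*(w))`,
`w ∈ Ω = [-2^{N-1}, 2^{N-1})ⁿ` (normalized Lebesgue measure), for every `R ∈ D₀ = D(0)`
the probability that `R` is `D(w)`-bad is at most `C(n,γ) 2^{-γ r}`.  In particular,
for every `τ > 0` there is `r = r(n, γ, τ)` making this probability at most `τ` for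
every `R ∈ D₀`. -/
theorem statement17 (n : ℕ) (hn : 0 < n) (γ : ℝ) (hγ : γ ∈ Set.Ioo (0 : ℝ) 1) :
    (∃ C : ℝ, 0 < C ∧
      ∀ (r : ℕ), 1 ≤ r →
      ∀ Q : Cube n, Q.c = (0 : Rn n) →
      ∀ N : ℤ, (2:ℝ) ^ (N - 3) ≤ Q.l → Q.l < (2:ℝ) ^ (N - 2) →
      ∀ R ∈ dyadicLattice (Qstar n N 0),
        gridProb n N
            {w ∈ gridOmega n N | IsBad γ r (dyadicLattice (Qstar n N w)) R}
          ≤ ENNReal.ofReal (C * (2:ℝ) ^ (-(γ * (r : ℝ)))))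
    ∧ ∀ τ : ℝ, 0 < τ →
      ∃ r : ℕ, 1 ≤ r ∧
        ∀ Q : Cube n, Q.c = (0 : Rn n) →
        ∀ N : ℤ, (2:ℝ) ^ (N - 3) ≤ Q.l → Q.l < (2:ℝ) ^ (N - 2) →
        ∀ R ∈ dyadicLattice (Qstar n N 0),
          gridProb n N
              {w ∈ gridOmega n N | IsBad γ r (dyadicLattice (Qstar n N w)) R}
            ≤ ENNReal.ofReal τ := by
  obtain ⟨hγ0, hγ1⟩ := hγ
  have hργ : (1:ℝ) < (2:ℝ) ^ γ := by
    rw [show (1:ℝ) = (2:ℝ) ^ (0:ℝ) by simp]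
    exact Real.rpow_lt_rpow_left_iff one_lt_two |>.mpr hγ0
  have hden : (0:ℝ) < (2:ℝ) ^ γ - 1 := by linarith
  set C : ℝ := 130 * n / ((2:ℝ) ^ γ - 1) with hC_def
  have hnR : (0:ℝ) < (n:ℝ) := by exact_mod_cast hn
  have hCpos : 0 < C := by
    rw [hC_def]
    apply div_pos (by linarith) hden
  have key : ∀ (r : ℕ), 1 ≤ r →
      ∀ Q : Cube n, Q.c = (0 : Rn n) →
      ∀ N : ℤ, (2:ℝ) ^ (N - 3) ≤ Q.l → Q.l < (2:ℝ) ^ (N - 2) →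
      ∀ R ∈ dyadicLattice (Qstar n N 0),
        gridProb n N
            {w ∈ gridOmega n N | IsBad γ r (dyadicLattice (Qstar n N w)) R}
          ≤ ENNReal.ofReal (C * (2:ℝ) ^ (-(γ * (r : ℝ)))) := by
    intro r hr Q hQ N hN1 hN2 R hR
    obtain ⟨k, jR, hjR, rfl⟩ := hR
    exact mainBound hn hγ0 hγ1 r hr N k jR
  refine ⟨⟨C, hCpos, key⟩, ?_⟩
  intro τ hτ
  have hbase0 : (0:ℝ) < (2:ℝ) ^ (-γ : ℝ) := Real.rpow_pos_of_pos two_pos _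
  have hbase1 : (2:ℝ) ^ (-γ : ℝ) < 1 :=
    Real.rpow_lt_one_of_one_lt_of_neg one_lt_two (by linarith)
  obtain ⟨r0, hr0⟩ := exists_pow_lt_of_lt_one (div_pos hτ hCpos) hbase1
  refine ⟨max r0 1, le_max_right _ _, ?_⟩
  intro Q hQ N hN1 hN2 R hR
  refine le_trans (key (max r0 1) (le_max_right _ _) Q hQ N hN1 hN2 R hR) ?_
  apply ENNReal.ofReal_le_ofReal
  have heq : (2:ℝ) ^ (-(γ * ((max r0 1 : ℕ) : ℝ))) = ((2:ℝ) ^ (-γ : ℝ)) ^ (max r0 1) := by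
    rw [← Real.rpow_natCast ((2:ℝ) ^ (-γ : ℝ)) (max r0 1), ← Real.rpow_mul (by norm_num)]
    congr 1; ring
  rw [heq]
  have hmono : ((2:ℝ) ^ (-γ : ℝ)) ^ (max r0 1) ≤ ((2:ℝ) ^ (-γ : ℝ)) ^ r0 :=
    pow_le_pow_of_le_one hbase0.le hbase1.le (le_max_left _ _)
  calc C * ((2:ℝ) ^ (-γ : ℝ)) ^ (max r0 1)
      ≤ C * (τ / C) := by
        apply mul_le_mul_of_nonneg_left _ hCpos.le
        exact le_trans hmono hr0.le
    _ = τ := by field_simp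


end
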